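/- Fix 1 ≤ ℓ ≤ N. Then: (a) there exist R > 0 and a real sequence (r_n)_{n≥0} with r_0 = 1/ρ_ℓ such that ∑_{n=0}^∞ r_n q^{−n} converges absolutely for every q ∈ ℂ with |q| > R and 1/ζ_ℓ(q) = ∑_{n=0}^∞ r_n q^{−n} for every real q > R; (b) if in addition ρ_1 > 1, there exist R > 0 and a real sequence (s_n)_{n≥0} with s_0 = 1/(ρ_ℓ − 1) such that ∑_{n=0}^∞ s_n q^{−n} converges absolutely for |q| > R and 1/(ζ_ℓ(q) − 1) = ∑_{n=0}^∞ s_n q^{−n} for every real q > R. Analogously, for each 1 ≤ ℓ ≤ N̂ there exist such series with 1/ζ̂_ℓ(q) = ∑_{n=0}^∞ r̂_n q^{−n} (r̂_0 = 1/ρ̂_ℓ) and 1/(ζ̂_ℓ(q) + 1) = ∑_{n=0}^∞ ŝ_n q^{−n} (ŝ_0 = 1/(ρ̂_ℓ + 1)) for all real q > R, both series converging absolutely for |q| > R. -/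

import Mathlib

/-- The Laplace exponent of a hyperexponential Lévy process, extended to a rational
function on `ℂ`. -/
noncomputable def psi (σ A : ℝ) (N Nh : ℕ) (aa ρ ah ρh : ℕ → ℝ) (z : ℂ) : ℂ :=
  (σ : ℂ) ^ 2 * z ^ 2 / 2 + (A : ℂ) * z
    + z * ∑ ℓ ∈ Finset.Icc 1 N, (aa ℓ : ℂ) / ((ρ ℓ : ℂ) - z)
    - z * ∑ ℓ ∈ Finset.Icc 1 Nh, (ah ℓ : ℂ) / ((ρh ℓ : ℂ) + z)

lemma psi_ofReal (σ A : ℝ) (N Nh : ℕ) (aa ρ ah ρh : ℕ → ℝ) (x : ℝ) :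
    psi σ A N Nh aa ρ ah ρh (x : ℂ) =
      ((σ ^ 2 * x ^ 2 / 2 + A * x
        + x * ∑ j ∈ Finset.Icc 1 N, aa j / (ρ j - x)
        - x * ∑ j ∈ Finset.Icc 1 Nh, ah j / (ρh j + x) : ℝ) : ℂ) := by
  unfold psi; push_cast; ring

set_option maxHeartbeats 1000000 in
open Finset Metric in
lemma key (σ A : ℝ) (N Nh : ℕ) (aa ρ ah ρh : ℕ → ℝ)
    (hpos : ∀ j ∈ Finset.Icc 1 N, 0 < aa j)
    (hposh : ∀ j ∈ Finset.Icc 1 Nh, 0 < ah j)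
    (hρ0 : ρ 0 = 0) (hρh0 : ρh 0 = 0)
    (hmono : ∀ i j, i < j → j ≤ N → ρ i < ρ j)
    (hmonoh : ∀ i j, i < j → j ≤ Nh → ρh i < ρh j)
    (ℓ : ℕ) (hℓ : ℓ ∈ Finset.Icc 1 N)
    (Z : ℝ → ℝ)
    (hZ : ∀ q : ℝ, 0 < q → Z q ∈ Set.Ioo (ρ (ℓ - 1)) (ρ ℓ) ∧
        psi σ A N Nh aa ρ ah ρh (Z q : ℂ) = (q : ℂ))
    (t : ℝ) (ht : t ≠ ρ ℓ) :
    ∃ R > (0 : ℝ), ∃ r : ℕ → ℝ, r 0 = 1 / (ρ ℓ - t) ∧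
      (∀ q : ℂ, R < ‖q‖ → Summable (fun n : ℕ => ‖(r n : ℂ) * q ^ (-(n : ℤ))‖)) ∧
      (∀ q : ℝ, R < q → 1 / (Z q - t) = ∑' n : ℕ, r n * q ^ (-(n : ℤ))) := by
  obtain ⟨hℓ1, hℓN⟩ := Finset.mem_Icc.1 hℓ
  set b := ρ ℓ with hbdef
  have hb0 : 0 < b := by have := hmono 0 ℓ hℓ1 hℓN; simpa [hρ0] using this
  set c := aa ℓ with hcdef
  have hc0 : 0 < c := hpos ℓ hℓ
  have hρl1 : 0 ≤ ρ (ℓ - 1) := by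
    rcases Nat.eq_zero_or_pos (ℓ - 1) with h | h
    · simp [h, hρ0]
    · have := hmono 0 (ℓ - 1) h (le_trans (Nat.sub_le _ _) hℓN)
      rw [hρ0] at this; exact this.le
  set S1 : ℂ → ℂ := fun z => ∑ j ∈ (Finset.Icc 1 N).erase ℓ, (aa j : ℂ) / ((ρ j : ℂ) - z)
    with hS1def
  set S2 : ℂ → ℂ := fun z => ∑ j ∈ Finset.Icc 1 Nh, (ah j : ℂ) / ((ρh j : ℂ) + z) with hS2def
  set Φ : ℂ → ℂ := fun z => ((b : ℂ) - z) * ((σ : ℂ) ^ 2 * z ^ 2 / 2 + (A : ℂ) * z)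
      + z * (c : ℂ) + ((b : ℂ) - z) * (z * S1 z) - ((b : ℂ) - z) * (z * S2 z) with hΦdef
  -- the algebraic identity
  have hΦpsi : ∀ z : ℂ, (b : ℂ) ≠ z →
      Φ z = ((b : ℂ) - z) * psi σ A N Nh aa ρ ah ρh z := by
    intro z hz
    have hbz : (b : ℂ) - z ≠ 0 := sub_ne_zero.mpr hz
    have hsplit : ∑ j ∈ Finset.Icc 1 N, (aa j : ℂ) / ((ρ j : ℂ) - z)
        = (c : ℂ) / ((b : ℂ) - z) + S1 z := by
      rw [hS1def]
      exact (Finset.add_sum_erase _ (fun j => (aa j : ℂ) / ((ρ j : ℂ) - z)) hℓ).symm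
    rw [hΦdef]
    unfold psi
    rw [hsplit]
    have hS1z : S1 z = S1 z := rfl
    field_simp
    ring
  have hΦb : Φ b = (b : ℂ) * (c : ℂ) := by simp [hΦdef]
  have hΦb0 : Φ b ≠ 0 := by
    rw [hΦb]
    exact mul_ne_zero (by exact_mod_cast hb0.ne') (by exact_mod_cast hc0.ne')
  -- differentiability of Φ away from the other poles
  have hdiffΦ : ∀ z : ℂ, (∀ j ∈ (Finset.Icc 1 N).erase ℓ, (ρ j : ℂ) - z ≠ 0) →
      (∀ j ∈ Finset.Icc 1 Nh, (ρh j : ℂ) + z ≠ 0) → DifferentiableAt ℂ Φ z := by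
    intro z h1 h2
    have d1 : DifferentiableAt ℂ S1 z := by
      rw [hS1def]
      apply DifferentiableAt.fun_sum
      intro j hj
      exact (differentiableAt_const _).div
        ((differentiableAt_const _).sub differentiableAt_id) (h1 j hj)
    have d2 : DifferentiableAt ℂ S2 z := by
      rw [hS2def]
      apply DifferentiableAt.fun_sum
      intro j hj
      exact (differentiableAt_const _).div
        ((differentiableAt_const _).add differentiableAt_id) (h2 j hj)
    have dbz : DifferentiableAt ℂ (fun z : ℂ => (b : ℂ) - z) z :=
      (differentiableAt_const _).sub differentiableAt_id
    have dE : DifferentiableAt ℂ (fun z : ℂ => (σ : ℂ) ^ 2 * z ^ 2 / 2 + (A : ℂ) * z) z := by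
      fun_prop
    rw [hΦdef]
    exact (((dbz.mul dE).add (differentiableAt_id.mul (differentiableAt_const _))).add
      (dbz.mul (differentiableAt_id.mul d1))).sub (dbz.mul (differentiableAt_id.mul d2))
  -- a ball avoiding the other poles
  obtain ⟨ε1, hε1, hb1⟩ : ∃ ε1 > (0 : ℝ), ∀ z ∈ Metric.ball (b : ℂ) ε1,
      (∀ j ∈ (Finset.Icc 1 N).erase ℓ, (ρ j : ℂ) - z ≠ 0) ∧
      (∀ j ∈ Finset.Icc 1 Nh, (ρh j : ℂ) + z ≠ 0) := by
    classical
    set P : Finset ℂ := ((Finset.Icc 1 N).erase ℓ).image (fun j => (ρ j : ℂ)) ∪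
      (Finset.Icc 1 Nh).image (fun j => (-(ρh j : ℝ) : ℂ)) with hP
    have hbP : (b : ℂ) ∉ (P : Set ℂ) := by
      intro hmem
      simp only [hP, Finset.coe_union, Set.mem_union, Finset.coe_image, Set.mem_image,
        Finset.mem_coe] at hmem
      rcases hmem with ⟨j, hj, hc⟩ | ⟨j, hj, hc⟩
      · obtain ⟨hjne, hjmem⟩ := Finset.mem_erase.1 hj
        have hρjb : ρ j = b := by exact_mod_cast hc
        rcases lt_or_gt_of_ne hjne with h | h
        · have := hmono j ℓ h hℓN; rw [← hbdef] at this; linarith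
        · have := hmono ℓ j h (Finset.mem_Icc.1 hjmem).2; rw [← hbdef] at this; linarith
      · obtain ⟨hj1, hjNh⟩ := Finset.mem_Icc.1 hj
        have hρhj : 0 < ρh j := by have := hmonoh 0 j hj1 hjNh; simpa [hρh0] using this
        have : -(ρh j) = b := by exact_mod_cast hc
        linarith
    obtain ⟨ε1, hε1, hball⟩ := Metric.isOpen_iff.1 P.finite_toSet.isClosed.isOpen_compl b hbP
    refine ⟨ε1, hε1, fun z hz => ⟨fun j hj h0 => ?_, fun j hj h0 => ?_⟩⟩
    · have hzP : z ∉ (P : Set ℂ) := hball hz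
      apply hzP
      have hzj : z = (ρ j : ℂ) := by linear_combination -h0
      simp only [hP, Finset.coe_union, Set.mem_union, Finset.coe_image, Set.mem_image,
        Finset.mem_coe]
      exact Or.inl ⟨j, hj, hzj.symm⟩
    · have hzP : z ∉ (P : Set ℂ) := hball hz
      apply hzP
      have hzj : z = (-(ρh j : ℝ) : ℂ) := by push_cast; linear_combination h0
      simp only [hP, Finset.coe_union, Set.mem_union, Finset.coe_image, Set.mem_image,
        Finset.mem_coe]
      exact Or.inr ⟨j, hj, hzj.symm⟩
  have hΦd1 : ∀ z ∈ Metric.ball (b : ℂ) ε1, DifferentiableAt ℂ Φ z :=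
    fun z hz => hdiffΦ z (hb1 z hz).1 (hb1 z hz).2
  have hΦcont : ContinuousAt Φ b := (hΦd1 b (Metric.mem_ball_self hε1)).continuousAt
  obtain ⟨ε2, hε2, hΦne⟩ := Metric.eventually_nhds_iff.1 (hΦcont.eventually_ne hΦb0)
  set ε2' : ℝ := min ε1 ε2 with hε2'def
  have hε2' : 0 < ε2' := lt_min hε1 hε2
  have hsubset1 : Metric.ball (b : ℂ) ε2' ⊆ Metric.ball (b : ℂ) ε1 :=
    Metric.ball_subset_ball (min_le_left _ _)
  have hΦne' : ∀ z ∈ Metric.ball (b : ℂ) ε2', Φ z ≠ 0 := by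
    intro z hz
    exact hΦne (lt_of_lt_of_le (Metric.mem_ball.1 hz) (min_le_right _ _))
  set F : ℂ → ℂ := fun z => ((b : ℂ) - z) / Φ z with hFdef
  have hFdiff : ∀ z ∈ Metric.ball (b : ℂ) ε2', DifferentiableAt ℂ F z := by
    intro z hz
    exact ((differentiableAt_const _).sub differentiableAt_id).div
      (hΦd1 z (hsubset1 hz)) (hΦne' z hz)
  have hmem2' : (b : ℂ) ∈ Metric.ball (b : ℂ) ε2' := Metric.mem_ball_self hε2'
  have hFan : AnalyticOnNhd ℂ F (Metric.ball (b : ℂ) ε2') :=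
    DifferentiableOn.analyticOnNhd
      (fun z hz => (hFdiff z hz).differentiableWithinAt) Metric.isOpen_ball
  have hdFcont : ContinuousAt (deriv F) b := (hFan.deriv b hmem2').continuousAt
  -- strict derivative of F at b
  have hΦan : AnalyticAt ℂ Φ b :=
    (DifferentiableOn.analyticOnNhd
      (fun z hz => (hΦd1 z hz).differentiableWithinAt) Metric.isOpen_ball) b
      (Metric.mem_ball_self hε1)
  obtain ⟨pΦ, hpΦ⟩ := hΦan
  have hΦs : HasStrictDerivAt Φ (pΦ 1 fun _ => 1) b := hpΦ.hasStrictDerivAt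
  have hFs0 : HasStrictDerivAt F
      (((0 - 1) * Φ b - ((b : ℂ) - b) * (pΦ 1 fun _ => 1)) / Φ b ^ 2) b := by
    rw [hFdef]
    exact ((hasStrictDerivAt_const (b : ℂ) ((b : ℂ))).sub (hasStrictDerivAt_id _)).div hΦs hΦb0
  have hval : ((0 - 1) * Φ b - ((b : ℂ) - b) * (pΦ 1 fun _ => 1)) / Φ b ^ 2 = -(Φ b)⁻¹ := by
    field_simp
    ring
  rw [hval] at hFs0
  have hF'0 : -(Φ b)⁻¹ ≠ 0 := by
    simpa using hΦb0
  have hdFb : deriv F b = -(Φ b)⁻¹ := hFs0.hasDerivAt.deriv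
  -- inverse function theorem
  set e := (hFs0.hasStrictFDerivAt_equiv hF'0).toOpenPartialHomeomorph F with hedef
  have hecoe : ⇑e = F := (hFs0.hasStrictFDerivAt_equiv hF'0).toOpenPartialHomeomorph_coe
  have hbsource : (b : ℂ) ∈ e.source :=
    (hFs0.hasStrictFDerivAt_equiv hF'0).mem_toOpenPartialHomeomorph_source
  have hnhds : e.source ∩ (Metric.ball (b : ℂ) ε2' ∩ {z | deriv F z ≠ 0}) ∈ nhds (b : ℂ) := by
    apply Filter.inter_mem (e.open_source.mem_nhds hbsource)
    apply Filter.inter_mem (Metric.isOpen_ball.mem_nhds hmem2')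
    exact hdFcont.eventually_ne (by rw [hdFb]; exact hF'0)
  obtain ⟨ε3, hε3, hball3⟩ := Metric.mem_nhds_iff.1 hnhds
  set G := e.symm with hGdef
  set W := e.target ∩ e.symm ⁻¹' (Metric.ball (b : ℂ) ε3) with hWdef
  have hWopen : IsOpen W := e.isOpen_inter_preimage_symm Metric.isOpen_ball
  have hFb : F (b : ℂ) = 0 := by rw [hFdef]; simp
  have h0target : (0 : ℂ) ∈ e.target := by
    have h := e.map_source hbsource
    rwa [hecoe, hFb] at h
  have hG0 : G 0 = (b : ℂ) := by
    have h := e.left_inv hbsource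
    rwa [hecoe, hFb] at h
  have h0W : (0 : ℂ) ∈ W := by
    refine ⟨h0target, ?_⟩
    simp only [Set.mem_preimage, ← hGdef, hG0]
    exact Metric.mem_ball_self hε3
  have hGdiff : DifferentiableOn ℂ G W := by
    rintro y ⟨hy1, hy2⟩
    have hGy : G y ∈ Metric.ball (b : ℂ) ε3 := hy2
    have hGyfull := hball3 hGy
    have hFder : HasDerivAt F (deriv F (G y)) (G y) :=
      (hFdiff _ hGyfull.2.1).hasDerivAt
    have hne0 : deriv F (G y) ≠ 0 := hGyfull.2.2
    have hsym := e.hasDerivAt_symm hy1 hne0 (by rw [hecoe]; exact hFder)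
    exact hsym.differentiableAt.differentiableWithinAt
  have hGan : AnalyticAt ℂ G 0 := (hGdiff.analyticOnNhd hWopen) 0 h0W
  have hbt : b ≠ t := Ne.symm ht
  have hbtC : (b : ℂ) - (t : ℂ) ≠ 0 := sub_ne_zero.mpr (by exact_mod_cast hbt)
  have hG0t : G 0 - (t : ℂ) ≠ 0 := by rw [hG0]; exact hbtC
  set H : ℂ → ℂ := fun u => (G u - (t : ℂ))⁻¹ with hHdef
  have hHan : AnalyticAt ℂ H 0 := (hGan.sub analyticAt_const).inv hG0t
  obtain ⟨p, hp⟩ := hHan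
  obtain ⟨rp, hOnBall⟩ := hp
  obtain ⟨r0, hr0pos, hr0lt⟩ : ∃ r0 : NNReal, 0 < r0 ∧ (r0 : ENNReal) < rp := by
    rcases ENNReal.lt_iff_exists_nnreal_btwn.1 hOnBall.r_pos with ⟨r0, h1, h2⟩
    exact ⟨r0, by exact_mod_cast h1, h2⟩
  have hr0rad : (r0 : ENNReal) < p.radius := hr0lt.trans_le hOnBall.r_le
  have hsum0 : Summable (fun n => ‖p n‖ * (r0 : ℝ) ^ n) := p.summable_norm_mul_pow hr0rad
  have hcoe : ∀ n, ‖p.coeff n‖ ≤ ‖p n‖ := by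
    intro n
    calc ‖p.coeff n‖ = ‖p n 1‖ := rfl
      _ ≤ ‖p n‖ * ∏ _i : Fin n, ‖(1 : Fin n → ℂ) _i‖ := (p n).le_opNorm 1
      _ = ‖p n‖ := by simp
  have hr0R : (0 : ℝ) < (r0 : ℝ) := by exact_mod_cast hr0pos
  set C : ℝ := σ ^ 2 * b ^ 2 / 2 + |A| * b + b * ((∑ j ∈ Finset.Icc 1 N, aa j) / ε3) with hCdef
  set R : ℝ := max (r0 : ℝ)⁻¹ (C + 1) with hRdef
  have hRinv : (r0 : ℝ)⁻¹ ≤ R := le_max_left _ _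
  have hRpos : 0 < R := lt_of_lt_of_le (by positivity) hRinv
  -- for q > R the root is within ε3 of b
  have hclose : ∀ q : ℝ, R < q → b - ε3 < Z q := by
    intro q hq
    have hq0 : 0 < q := lt_trans hRpos hq
    obtain ⟨hZq, hpsiq⟩ := hZ q hq0
    by_contra hcon
    push_neg at hcon
    set x := Z q with hxdef
    have hx0 : 0 < x := lt_of_le_of_lt hρl1 hZq.1
    have hxb : x < b := hZq.2
    have hreal : σ ^ 2 * x ^ 2 / 2 + A * x + x * ∑ j ∈ Finset.Icc 1 N, aa j / (ρ j - x)
        - x * ∑ j ∈ Finset.Icc 1 Nh, ah j / (ρh j + x) = q := by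
      have h := hpsiq
      rw [psi_ofReal] at h
      exact_mod_cast h
    have hT1 : ∑ j ∈ Finset.Icc 1 N, aa j / (ρ j - x)
        ≤ (∑ j ∈ Finset.Icc 1 N, aa j) / ε3 := by
      rw [Finset.sum_div]
      apply Finset.sum_le_sum
      intro j hj
      obtain ⟨hj1, hjN⟩ := Finset.mem_Icc.1 hj
      rcases lt_or_ge j ℓ with h | h
      · have hρjx : ρ j < x := by
          have hjle : j ≤ ℓ - 1 := Nat.le_sub_one_of_lt h
          rcases eq_or_lt_of_le hjle with he | hlt
          · rw [he]; exact hZq.1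
          · have := hmono j (ℓ - 1) hlt (le_trans (Nat.sub_le _ _) hℓN)
            linarith [hZq.1]
        have hneg : aa j / (ρ j - x) < 0 :=
          div_neg_of_pos_of_neg (hpos j hj) (by linarith)
        have hnn : 0 ≤ aa j / ε3 := div_nonneg (hpos j hj).le hε3.le
        linarith
      · have hρj : b ≤ ρ j := by
          rcases eq_or_lt_of_le h with he | hlt
          · rw [hbdef, he]
          · exact (hmono ℓ j hlt hjN).le
        have hd : ε3 ≤ ρ j - x := by linarith
        gcongr
        exact (hpos j hj).le
    have hS'nn : 0 ≤ (∑ j ∈ Finset.Icc 1 N, aa j) / ε3 :=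
      div_nonneg (Finset.sum_nonneg fun j hj => (hpos j hj).le) hε3.le
    have hT1x : x * (∑ j ∈ Finset.Icc 1 N, aa j / (ρ j - x))
        ≤ b * ((∑ j ∈ Finset.Icc 1 N, aa j) / ε3) := by
      calc x * (∑ j ∈ Finset.Icc 1 N, aa j / (ρ j - x))
          ≤ x * ((∑ j ∈ Finset.Icc 1 N, aa j) / ε3) :=
            mul_le_mul_of_nonneg_left hT1 hx0.le
        _ ≤ b * ((∑ j ∈ Finset.Icc 1 N, aa j) / ε3) :=
            mul_le_mul_of_nonneg_right hxb.le hS'nn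
    have hT2 : 0 ≤ x * ∑ j ∈ Finset.Icc 1 Nh, ah j / (ρh j + x) := by
      apply mul_nonneg hx0.le
      apply Finset.sum_nonneg
      intro j hj
      obtain ⟨hj1, hjNh⟩ := Finset.mem_Icc.1 hj
      have : 0 < ρh j := by have := hmonoh 0 j hj1 hjNh; simpa [hρh0] using this
      exact div_nonneg (hposh j hj).le (by linarith)
    have hAx : A * x ≤ |A| * b := by
      calc A * x ≤ |A * x| := le_abs_self _
        _ = |A| * |x| := abs_mul _ _
        _ = |A| * x := by rw [abs_of_pos hx0]
        _ ≤ |A| * b := mul_le_mul_of_nonneg_left hxb.le (abs_nonneg _)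
    have hσx : σ ^ 2 * x ^ 2 / 2 ≤ σ ^ 2 * b ^ 2 / 2 := by
      have h1 : 0 ≤ σ ^ 2 * ((b - x) * (b + x)) :=
        mul_nonneg (sq_nonneg σ) (mul_nonneg (by linarith) (by linarith))
      nlinarith [h1]
    have hqC : q ≤ C := by rw [hCdef]; linarith
    have hCR : C + 1 ≤ R := le_max_right _ _
    linarith
  -- the answer
  refine ⟨R, hRpos, fun n => (p.coeff n).re, ?_, ?_, ?_⟩
  · -- leading coefficient
    show (p.coeff 0).re = 1 / (b - t)
    have hc0' : p.coeff 0 = H 0 := hOnBall.coeff_zero 1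
    have hH0 : H 0 = (((b - t : ℝ) : ℂ))⁻¹ := by
      rw [hHdef]
      simp only [hG0]
      push_cast
      ring
    rw [hc0', hH0, ← Complex.ofReal_inv, Complex.ofReal_re, one_div]
  · -- summability
    intro q hq
    have hqnorm : (r0 : ℝ)⁻¹ < ‖q‖ := lt_of_le_of_lt hRinv hq
    have hqpos : 0 < ‖q‖ := lt_trans (by positivity) hqnorm
    have hqinv : ‖q‖⁻¹ ≤ (r0 : ℝ) := by
      rw [inv_le_comm₀ hqpos hr0R]
      exact hqnorm.le
    apply Summable.of_nonneg_of_le (fun n => norm_nonneg _) _ hsum0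
    intro n
    have heq : ‖((((p.coeff n).re : ℝ)) : ℂ) * q ^ (-(n : ℤ))‖
        = |(p.coeff n).re| * (‖q‖⁻¹) ^ n := by
      rw [norm_mul, Complex.norm_real, Real.norm_eq_abs, norm_zpow, zpow_neg,
        zpow_natCast, inv_pow]
    rw [heq]
    apply mul_le_mul _ (pow_le_pow_left₀ (by positivity) hqinv n) (by positivity)
      (norm_nonneg _)
    exact le_trans (Complex.abs_re_le_norm _) (hcoe n)
  · -- the identity
    intro q hq
    have hq0 : 0 < q := lt_trans hRpos hq
    obtain ⟨hZq, hpsiq⟩ := hZ q hq0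
    have hxb : Z q < b := hZq.2
    have hxlow : b - ε3 < Z q := hclose q hq
    have hxball : ((Z q : ℝ) : ℂ) ∈ Metric.ball (b : ℂ) ε3 := by
      rw [Metric.mem_ball, Complex.isometry_ofReal.dist_eq, Real.dist_eq]
      rw [abs_sub_lt_iff]
      constructor <;> linarith
    have hmem3 := hball3 hxball
    have hsrc : ((Z q : ℝ) : ℂ) ∈ e.source := hmem3.1
    have hbzq : (b : ℂ) ≠ ((Z q : ℝ) : ℂ) := by
      intro hcontr
      exact hxb.ne' (by exact_mod_cast hcontr)
    have hbzC : (b : ℂ) - ((Z q : ℝ) : ℂ) ≠ 0 := sub_ne_zero.mpr hbzq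
    have hqC0 : ((q : ℝ) : ℂ) ≠ 0 := by exact_mod_cast hq0.ne'
    have hΦz : Φ ((Z q : ℝ) : ℂ) = ((b : ℂ) - ((Z q : ℝ) : ℂ)) * ((q : ℝ) : ℂ) := by
      rw [hΦpsi _ hbzq, hpsiq]
    have hFz : F ((Z q : ℝ) : ℂ) = (((q : ℝ) : ℂ))⁻¹ := by
      rw [hFdef]
      simp only []
      rw [hΦz]
      field_simp
    have hGz : (⇑G) (((q : ℝ) : ℂ))⁻¹ = ((Z q : ℝ) : ℂ) := by
      have h := e.left_inv hsrc
      rw [hecoe, hFz] at h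
      exact h
    have hu : ‖(((q : ℝ) : ℂ))⁻¹‖ < (r0 : ℝ) := by
      rw [norm_inv, Complex.norm_real, Real.norm_eq_abs, abs_of_pos hq0]
      rw [inv_lt_comm₀ hq0 hr0R]
      exact lt_of_le_of_lt hRinv hq
    have huball : (((q : ℝ) : ℂ))⁻¹ ∈ EMetric.ball (0 : ℂ) rp := by
      change edist (((q : ℝ) : ℂ))⁻¹ 0 < rp
      rw [edist_zero_right]
      calc (‖(((q : ℝ) : ℂ))⁻¹‖₊ : ENNReal) < (r0 : ENNReal) := by
            rw [ENNReal.coe_lt_coe]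
            exact_mod_cast hu
        _ < rp := hr0lt
    have hHsum := hOnBall.hasSum huball
    simp only [zero_add, FormalMultilinearSeries.apply_eq_pow_smul_coeff,
      smul_eq_mul] at hHsum
    have hHval : H (((q : ℝ) : ℂ))⁻¹ = (((Z q - t : ℝ) : ℂ))⁻¹ := by
      rw [hHdef]
      simp only [hGz]
      push_cast
      ring
    have htsum : (((Z q - t : ℝ) : ℂ))⁻¹
        = ∑' n : ℕ, ((((q : ℝ) : ℂ))⁻¹) ^ n * p.coeff n := by
      rw [← hHval]
      exact hHsum.tsum_eq.symm
    have hsummable : Summable fun n : ℕ => ((((q : ℝ) : ℂ))⁻¹) ^ n * p.coeff n :=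
      hHsum.summable
    calc 1 / (Z q - t) = (((Z q - t : ℝ) : ℂ)⁻¹).re := by
          rw [← Complex.ofReal_inv, Complex.ofReal_re, one_div]
      _ = (∑' n : ℕ, ((((q : ℝ) : ℂ))⁻¹) ^ n * p.coeff n).re := by rw [← htsum]
      _ = ∑' n : ℕ, (((((q : ℝ) : ℂ))⁻¹) ^ n * p.coeff n).re :=
          Complex.re_tsum hsummable
      _ = ∑' n : ℕ, (p.coeff n).re * q ^ (-(n : ℤ)) := by
          congr 1
          funext n
          have hcast : ((((q : ℝ) : ℂ))⁻¹) ^ n = (((q⁻¹ ^ n : ℝ)) : ℂ) := by push_cast; ring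
          rw [hcast, Complex.re_ofReal_mul, zpow_neg, zpow_natCast, inv_pow]
          ring

lemma psi_neg (σ A : ℝ) (N Nh : ℕ) (aa ρ ah ρh : ℕ → ℝ) (z : ℂ) :
    psi σ A N Nh aa ρ ah ρh (-z) = psi σ (-A) Nh N ah ρh aa ρ z := by
  unfold psi
  push_cast
  simp only [sub_neg_eq_add, ← sub_eq_add_neg]
  ring


/-- Expansions in powers of `q^{-1}` of `1/ζ_ℓ(q)` (leading coefficient `1/ρ_ℓ`), of
`1/(ζ_ℓ(q) - 1)` (leading coefficient `1/(ρ_ℓ - 1)`, under `ρ_1 > 1`), and analogously of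
`1/ζ̂_ℓ(q)` and `1/(ζ̂_ℓ(q) + 1)`, each converging absolutely for `|q| > R`. -/
theorem reciprocal_interior_roots_series
    (σ A : ℝ) (N Nh : ℕ) (aa ρ ah ρh : ℕ → ℝ)
    (hσ : 0 ≤ σ)
    (hpos : ∀ ℓ ∈ Finset.Icc 1 N, 0 < aa ℓ)
    (hposh : ∀ ℓ ∈ Finset.Icc 1 Nh, 0 < ah ℓ)
    (hρ0 : ρ 0 = 0) (hρh0 : ρh 0 = 0)
    (hmono : ∀ i j, i < j → j ≤ N → ρ i < ρ j)
    (hmonoh : ∀ i j, i < j → j ≤ Nh → ρh i < ρh j)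
    (ζ ζh : ℕ → ℝ → ℝ)
    (hζ : ∀ ℓ ∈ Finset.Icc 1 N, ∀ q : ℝ, 0 < q →
        ζ ℓ q ∈ Set.Ioo (ρ (ℓ - 1)) (ρ ℓ) ∧
        psi σ A N Nh aa ρ ah ρh (ζ ℓ q : ℂ) = (q : ℂ))
    (hζh : ∀ ℓ ∈ Finset.Icc 1 Nh, ∀ q : ℝ, 0 < q →
        -(ζh ℓ q) ∈ Set.Ioo (-(ρh ℓ)) (-(ρh (ℓ - 1))) ∧
        psi σ A N Nh aa ρ ah ρh (-(ζh ℓ q : ℝ) : ℂ) = (q : ℂ)) :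
    (∀ ℓ ∈ Finset.Icc 1 N,
      -- (a)
      (∃ R > (0 : ℝ), ∃ r : ℕ → ℝ, r 0 = 1 / ρ ℓ ∧
        (∀ q : ℂ, R < ‖q‖ → Summable (fun n : ℕ => ‖(r n : ℂ) * q ^ (-(n : ℤ))‖)) ∧
        (∀ q : ℝ, R < q → 1 / ζ ℓ q = ∑' n : ℕ, r n * q ^ (-(n : ℤ)))) ∧
      -- (b)
      (ρ 1 > 1 →
        ∃ R > (0 : ℝ), ∃ s : ℕ → ℝ, s 0 = 1 / (ρ ℓ - 1) ∧
          (∀ q : ℂ, R < ‖q‖ → Summable (fun n : ℕ => ‖(s n : ℂ) * q ^ (-(n : ℤ))‖)) ∧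
          (∀ q : ℝ, R < q → 1 / (ζ ℓ q - 1) = ∑' n : ℕ, s n * q ^ (-(n : ℤ))))) ∧
    (∀ ℓ ∈ Finset.Icc 1 Nh,
      (∃ R > (0 : ℝ), ∃ rh : ℕ → ℝ, rh 0 = 1 / ρh ℓ ∧
        (∀ q : ℂ, R < ‖q‖ → Summable (fun n : ℕ => ‖(rh n : ℂ) * q ^ (-(n : ℤ))‖)) ∧
        (∀ q : ℝ, R < q → 1 / ζh ℓ q = ∑' n : ℕ, rh n * q ^ (-(n : ℤ)))) ∧
      (∃ R > (0 : ℝ), ∃ sh : ℕ → ℝ, sh 0 = 1 / (ρh ℓ + 1) ∧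
        (∀ q : ℂ, R < ‖q‖ → Summable (fun n : ℕ => ‖(sh n : ℂ) * q ^ (-(n : ℤ))‖)) ∧
        (∀ q : ℝ, R < q → 1 / (ζh ℓ q + 1) = ∑' n : ℕ, sh n * q ^ (-(n : ℤ))))) := by
  constructor
  · intro ℓ hℓ
    obtain ⟨hℓ1, hℓN⟩ := Finset.mem_Icc.1 hℓ
    have hρℓ : 0 < ρ ℓ := by have := hmono 0 ℓ hℓ1 hℓN; simpa [hρ0] using this
    constructor
    · obtain ⟨R, hR, r, h0, hs, hid⟩ := key σ A N Nh aa ρ ah ρh hpos hposh hρ0 hρh0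
        hmono hmonoh ℓ hℓ (ζ ℓ) (hζ ℓ hℓ) 0 hρℓ.ne
      exact ⟨R, hR, r, by simpa using h0, hs, fun q hq => by simpa using hid q hq⟩
    · intro hρ1
      have hρℓ1 : 1 < ρ ℓ := by
        rcases eq_or_lt_of_le hℓ1 with he | hlt
        · rw [← he]; exact hρ1
        · exact lt_trans hρ1 (hmono 1 ℓ hlt hℓN)
      obtain ⟨R, hR, r, h0, hs, hid⟩ := key σ A N Nh aa ρ ah ρh hpos hposh hρ0 hρh0
        hmono hmonoh ℓ hℓ (ζ ℓ) (hζ ℓ hℓ) 1 hρℓ1.ne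
      exact ⟨R, hR, r, h0, hs, hid⟩
  · intro ℓ hℓ
    obtain ⟨hℓ1, hℓN⟩ := Finset.mem_Icc.1 hℓ
    have hρℓ : 0 < ρh ℓ := by have := hmonoh 0 ℓ hℓ1 hℓN; simpa [hρh0] using this
    have hZ' : ∀ q : ℝ, 0 < q → ζh ℓ q ∈ Set.Ioo (ρh (ℓ - 1)) (ρh ℓ) ∧
        psi σ (-A) Nh N ah ρh aa ρ (ζh ℓ q : ℂ) = (q : ℂ) := by
      intro q hq
      obtain ⟨hmem, hpsi⟩ := hζh ℓ hℓ q hq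
      obtain ⟨h1, h2⟩ := hmem
      refine ⟨⟨by linarith, by linarith⟩, ?_⟩
      rw [← psi_neg σ A N Nh aa ρ ah ρh]
      rw [show -((ζh ℓ q : ℝ) : ℂ) = ((-(ζh ℓ q) : ℝ) : ℂ) by push_cast; ring] at hpsi ⊢
      exact hpsi
    constructor
    · obtain ⟨R, hR, r, h0, hs, hid⟩ := key σ (-A) Nh N ah ρh aa ρ hposh hpos hρh0 hρ0
        hmonoh hmono ℓ hℓ (ζh ℓ) hZ' 0 hρℓ.ne
      exact ⟨R, hR, r, by simpa using h0, hs, fun q hq => by simpa using hid q hq⟩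
    · have hne : (-1 : ℝ) ≠ ρh ℓ := by linarith
      obtain ⟨R, hR, r, h0, hs, hid⟩ := key σ (-A) Nh N ah ρh aa ρ hposh hpos hρh0 hρ0
        hmonoh hmono ℓ hℓ (ζh ℓ) hZ' (-1) hne
      refine ⟨R, hR, r, by simpa [sub_neg_eq_add] using h0, hs, fun q hq => ?_⟩
      have := hid q hq
      rwa [sub_neg_eq_add] at this
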